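/- arXiv:1312.2139 — 2 statements merged into one kernel-verified Lean document; each statement's English description precedes it below -/
import Mathlib

section
/- Let d ≥ 1, i ∈ {1,…,d}, and q ∈ [1,∞]. Consider the two optimization problems over θ ∈ ℝ^d: (A) minimize ⟨θ, 𝟙⟩ subject to ‖θ‖_q ≤ 1; (B) minimize ⟨θ, 𝟙⟩ subject to ‖θ‖_q ≤ 1 and θ_j ≥ 0 for all j ∈ {1,…,i}; here 𝟙 is the all-ones vector. If θ^A and θ^B are optimal solutions of (A) and (B) respectively, then ⟨𝟙, θ^A⟩ ≤ ⟨𝟙, θ^B⟩ − (1 − 1/q)·i/d^{1/q}. -/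
open scoped ENNReal

open Finset

private lemma aux_bern {a b t : ℝ} (ha : 0 < a) (hb : 0 ≤ b) (hba : b ≤ a)
    (ht0 : 0 ≤ t) (ht1 : t ≤ 1) :
    (1 - t) * (a - b) / a ^ t ≤ a ^ (1 - t) - b ^ (1 - t) := by
  set s := 1 - t with hs
  have hs0 : 0 ≤ s := by simp [hs]; linarith
  have hs1 : s ≤ 1 := by simp [hs]; linarith
  have hu : -1 ≤ b / a - 1 := by
    have : 0 ≤ b / a := div_nonneg hb ha.le
    linarith
  have hB := rpow_one_add_le_one_add_mul_self hu hs0 hs1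
  rw [add_sub_cancel] at hB
  have hmul : b ^ s ≤ a ^ s * (1 + s * (b / a - 1)) := by
    have h1 : (b / a) ^ s * a ^ s = b ^ s := by
      rw [← Real.mul_rpow (div_nonneg hb ha.le) ha.le, div_mul_cancel₀ _ ha.ne']
    calc b ^ s = (b / a) ^ s * a ^ s := h1.symm
      _ ≤ (1 + s * (b / a - 1)) * a ^ s := by
          apply mul_le_mul_of_nonneg_right hB (Real.rpow_nonneg ha.le _)
      _ = a ^ s * (1 + s * (b / a - 1)) := mul_comm _ _
  have hfin : a ^ s * (1 + s * (b / a - 1)) = a ^ s - s * (a - b) * (a ^ s / a) := by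
    field_simp
    ring
  have goal' : s * (a - b) * (a ^ s / a) ≤ a ^ s - b ^ s := by
    rw [hfin] at hmul; linarith
  have h2 : a ^ (-t) = a ^ s / a := by
    rw [show -t = s - 1 by rw [hs]; ring, Real.rpow_sub ha, Real.rpow_one]
  rw [div_eq_mul_inv, ← Real.rpow_neg ha.le, h2]
  linarith [goal']

private lemma aux_sum_bound (d : ℕ) (q : ℝ≥0∞) [hq : Fact (1 ≤ q)]
    (f : PiLp q (fun _ : Fin d => ℝ)) (hf : ‖f‖ ≤ 1) (s : Finset (Fin d)) :
    ∑ j ∈ s, |f j| ≤ (s.card : ℝ) ^ (1 - q⁻¹.toReal) := by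
  rcases q.dichotomy with hq' | hq'
  · subst hq'
    simp only [ENNReal.inv_top, ENNReal.toReal_zero, sub_zero, Real.rpow_one]
    calc ∑ j ∈ s, |f j| ≤ ∑ j ∈ s, (1:ℝ) := by
          apply Finset.sum_le_sum
          intro j _
          have h1 : ‖f j‖ ≤ ⨆ k, ‖f k‖ := le_ciSup (f := fun k => ‖f k‖) (Finite.bddAbove_range _) j
          rw [PiLp.norm_eq_ciSup] at hf
          calc |f j| = ‖f j‖ := (Real.norm_eq_abs _).symm
            _ ≤ _ := le_trans h1 hf
      _ = s.card := by simp
  · set p := q.toReal with hpdef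
    have hp1 : 1 ≤ p := hq'
    have hp0 : 0 < p := by linarith
    have hsnn : (0:ℝ) ≤ ∑ j ∈ s, |f j| := Finset.sum_nonneg fun j _ => abs_nonneg _
    have ht : q⁻¹.toReal = p⁻¹ := by rw [ENNReal.toReal_inv]
    have hsum_norm' : ∑ j, |f j| ^ p = ‖f‖ ^ p := by
      rw [PiLp.norm_eq_sum (by rw [← hpdef]; exact hp0) f, one_div,
        Real.rpow_inv_rpow (Finset.sum_nonneg fun j _ => by positivity) hp0.ne']
      simp [Real.norm_eq_abs, hpdef]
    have h5 : ∑ j ∈ s, |f j| ^ p ≤ 1 := by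
      calc ∑ j ∈ s, |f j| ^ p ≤ ∑ j, |f j| ^ p :=
            Finset.sum_le_sum_of_subset_of_nonneg (Finset.subset_univ s)
              (fun j _ _ => Real.rpow_nonneg (abs_nonneg _) _)
        _ = ‖f‖ ^ p := hsum_norm'
        _ ≤ 1 := Real.rpow_le_one (norm_nonneg f) hf hp0.le
    have key := Real.rpow_sum_le_const_mul_sum_rpow_of_nonneg s (f := fun j => |f j|) hp1
      (fun j _ => abs_nonneg _)
    have h6 : (∑ j ∈ s, |f j|) ^ p ≤ (s.card : ℝ) ^ (p - 1) := by
      calc (∑ j ∈ s, |f j|) ^ p ≤ (s.card:ℝ)^(p-1) * ∑ j ∈ s, |f j| ^ p := key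
        _ ≤ (s.card:ℝ)^(p-1) * 1 :=
            mul_le_mul_of_nonneg_left h5 (Real.rpow_nonneg (Nat.cast_nonneg _) _)
        _ = _ := mul_one _
    have h7 : ∑ j ∈ s, |f j| ≤ ((s.card:ℝ)^(p-1)) ^ p⁻¹ := by
      have h := Real.rpow_le_rpow (by positivity) h6 (by positivity : (0:ℝ) ≤ p⁻¹)
      rwa [Real.rpow_rpow_inv hsnn hp0.ne'] at h
    calc ∑ j ∈ s, |f j| ≤ _ := h7
      _ = (s.card:ℝ) ^ (1 - q⁻¹.toReal) := by
        rw [← Real.rpow_mul (Nat.cast_nonneg _), ht]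
        congr 1
        field_simp

/-- **Lemma (gap between constrained and sign-constrained linear optimization
over the `ℓ_q` ball).** Let `d ≥ 1`, `1 ≤ i ≤ d` and `q ∈ [1,∞]` (the norm on
`PiLp q` is the `ℓ_q`-norm, with `1/q = 0` when `q = ∞`). If `θ^A` minimizes
`θ ↦ ⟨θ, 𝟙⟩` subject to `‖θ‖_q ≤ 1`, and `θ^B` minimizes the same objective
subject to `‖θ‖_q ≤ 1` together with `θ_j ≥ 0` for the first `i` coordinates,
then `⟨𝟙, θ^A⟩ ≤ ⟨𝟙, θ^B⟩ − (1 − 1/q)·i/d^{1/q}`. -/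
theorem linear_opt_sign_constraint_gap
    (d : ℕ) (hd : 1 ≤ d) (i : ℕ) (hi1 : 1 ≤ i) (hid : i ≤ d)
    (q : ℝ≥0∞) [hq : Fact (1 ≤ q)]
    (θA θB : PiLp q (fun _ : Fin d => ℝ))
    (hAmem : ‖θA‖ ≤ 1)
    (hAmin : IsMinOn (fun θ : PiLp q (fun _ : Fin d => ℝ) => ∑ j, θ j)
      {θ | ‖θ‖ ≤ 1} θA)
    (hBmem : ‖θB‖ ≤ 1 ∧ ∀ j : Fin d, (j : ℕ) < i → 0 ≤ θB j)
    (hBmin : IsMinOn (fun θ : PiLp q (fun _ : Fin d => ℝ) => ∑ j, θ j)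
      {θ | ‖θ‖ ≤ 1 ∧ ∀ j : Fin d, (j : ℕ) < i → 0 ≤ θ j} θB) :
    ∑ j, θA j ≤ (∑ j, θB j) - (1 - q⁻¹.toReal) * i / (d : ℝ) ^ q⁻¹.toReal := by
  have hd0 : (0:ℝ) < d := by exact_mod_cast hd
  set t := q⁻¹.toReal with htdef
  have ht0 : 0 ≤ t := ENNReal.toReal_nonneg
  have ht1 : t ≤ 1 := by
    have h1 : q⁻¹ ≤ 1 := ENNReal.inv_le_one.mpr hq.out
    calc t ≤ (1:ℝ≥0∞).toReal := ENNReal.toReal_mono ENNReal.one_ne_top h1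
      _ = 1 := ENNReal.toReal_one
  haveI : Nonempty (Fin d) := Fin.pos_iff_nonempty.mp hd
  set c : ℝ := -(d:ℝ) ^ (-t) with hc
  set v : PiLp q (fun _ : Fin d => ℝ) := (WithLp.equiv q (Fin d → ℝ)).symm (Function.const _ c)
    with hv
  have hvnorm : ‖v‖ = 1 := by
    rw [hv, WithLp.equiv_symm_apply, PiLp.norm_toLp_const' (ι := Fin d)]
    rw [Real.norm_eq_abs, hc, abs_neg, abs_of_pos (Real.rpow_pos_of_pos hd0 _)]
    simp only [Fintype.card_fin, one_div]
    push_cast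
    rw [← htdef, ← Real.rpow_add hd0]
    simp
  have hAle : ∑ j, θA j ≤ -(d:ℝ) ^ (1 - t) := by
    have hfeas : v ∈ {θ : PiLp q (fun _ : Fin d => ℝ) | ‖θ‖ ≤ 1} := by
      rw [Set.mem_setOf_eq, hvnorm]
    have h := (isMinOn_iff.mp hAmin) v hfeas
    simp only at h
    have hvsum : ∑ j, v j = (d:ℝ) * c := by
      simp [hv, WithLp.equiv_symm_apply, Finset.sum_const, Finset.card_univ]
    have hdc : (d:ℝ) * c = -(d:ℝ) ^ (1 - t) := by
      rw [hc, show (1:ℝ) - t = 1 + (-t) by ring, Real.rpow_add hd0, Real.rpow_one]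
      ring
    rw [hvsum, hdc] at h
    exact h
  -- B side
  classical
  set s2 : Finset (Fin d) := Finset.univ.filter (fun j : Fin d => ¬ (j:ℕ) < i) with hs2
  have hcard1 : (Finset.univ.filter (fun j : Fin d => (j:ℕ) < i)).card = i := by
    have hmap : (Finset.univ.filter (fun j : Fin d => (j:ℕ) < i))
        = Finset.map (Fin.castLEEmb hid) Finset.univ := by
      ext j
      simp only [Finset.mem_filter, Finset.mem_univ, true_and, Finset.mem_map]
      constructor
      · intro hj
        refine ⟨⟨(j:ℕ), hj⟩, ?_⟩
        simp [Fin.ext_iff]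
      · rintro ⟨a, -, rfl⟩
        simpa using a.isLt
    rw [hmap]
    simp
  have hcard2 : s2.card = d - i := by
    have h2 := Finset.card_filter_add_card_filter_not
      (s := (Finset.univ : Finset (Fin d))) (p := fun j : Fin d => (j:ℕ) < i)
    rw [Finset.card_univ, Fintype.card_fin] at h2
    rw [hs2]
    omega
  have hBge : -((d:ℝ) - i) ^ (1 - t) ≤ ∑ j, θB j := by
    have hsplit := Finset.sum_filter_add_sum_filter_not Finset.univ
      (fun j : Fin d => (j:ℕ) < i) (fun j => θB j)
    have hpos : 0 ≤ ∑ j ∈ Finset.univ.filter (fun j : Fin d => (j:ℕ) < i), θB j :=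
      Finset.sum_nonneg fun j hj => hBmem.2 j (Finset.mem_filter.mp hj).2
    have habs := aux_sum_bound d q θB hBmem.1 s2
    have hneg : -((s2.card : ℝ)) ^ (1 - t) ≤ ∑ j ∈ s2, θB j := by
      have h1 : ∑ j ∈ s2, -|θB j| ≤ ∑ j ∈ s2, θB j :=
        Finset.sum_le_sum fun j _ => neg_abs_le _
      rw [Finset.sum_neg_distrib] at h1
      calc -((s2.card : ℝ)) ^ (1 - t) ≤ -∑ j ∈ s2, |θB j| := by
            rw [← htdef] at habs
            linarith
        _ ≤ _ := h1
    have hcast : ((s2.card : ℕ) : ℝ) = (d:ℝ) - i := by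
      rw [hcard2]
      push_cast [Nat.cast_sub hid]
      ring
    rw [hcast] at hneg
    calc -((d:ℝ) - i) ^ (1 - t) ≤ ∑ j ∈ s2, θB j := hneg
      _ ≤ (∑ j ∈ Finset.univ.filter (fun j : Fin d => (j:ℕ) < i), θB j) + ∑ j ∈ s2, θB j := by
          linarith
      _ = ∑ j, θB j := by rw [← hsplit, hs2]
  have hiled : (i:ℝ) ≤ (d:ℝ) := by exact_mod_cast hid
  have hi0 : (0:ℝ) ≤ i := Nat.cast_nonneg i
  have hkey := aux_bern (a := (d:ℝ)) (b := (d:ℝ) - i)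
    hd0 (by linarith) (by linarith) ht0 ht1
  have hsimp : (d:ℝ) - ((d:ℝ) - i) = i := by ring
  rw [hsimp] at hkey
  linarith
end

section
/- Let v ∈ ℝ^d satisfy ‖v‖_∞ ≤ 1, let δ ≥ 0, σ ≥ 0, and let X ~ N(δ·v, σ²·I_{d×d}) be a Gaussian random vector in ℝ^d. Then E[‖X‖_∞²] ≤ 3·σ²·log(3d) + 4·δ². -/
open MeasureTheory ProbabilityTheory
open Real
open scoped ENNReal NNReal


lemma map_eval_pi {ι : Type*} [Fintype ι] {α : ι → Type*} [∀ i, MeasurableSpace (α i)]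
    (μ : ∀ i, Measure (α i)) [∀ i, IsProbabilityMeasure (μ i)] (i : ι) :
    (Measure.pi μ).map (Function.eval i) = μ i := by
  classical
  ext s hs
  rw [Measure.map_apply (measurable_pi_apply i) hs, Set.eval_preimage, Measure.pi_pi,
    Finset.prod_eq_single i (fun j _ hj => by rw [Function.update_of_ne hj]; simp)
      (fun h => absurd (Finset.mem_univ i) h), Function.update_self]

lemma measurable_supabs (d : ℕ) (hd : 1 ≤ d) :
    Measurable (fun x : Fin d → ℝ => ⨆ j, |x j|) := by
  have : Nonempty (Fin d) := ⟨⟨0, hd⟩⟩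
  have h : (fun x : Fin d → ℝ => ⨆ j, |x j|)
      = Finset.univ.sup' Finset.univ_nonempty (fun j (x : Fin d → ℝ) => |x j|) :=
    funext fun x => by rw [Finset.sup'_apply, Finset.sup'_univ_eq_ciSup]
  rw [h]
  exact Finset.measurable_sup' _ (fun j _ => (measurable_pi_apply j).abs)


lemma pdf_smul_exp : (fun x => (gaussianPDFReal 0 1 x).toNNReal • Real.exp (4/9 * x^2))
      = fun x => (Real.sqrt (2 * π))⁻¹ * Real.exp (-(1/18) * x^2) := by
  funext x
  rw [NNReal.smul_def, Real.coe_toNNReal _ (gaussianPDFReal_nonneg _ _ _), smul_eq_mul]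
  simp only [gaussianPDFReal, NNReal.coe_one, mul_one, sub_zero]
  rw [mul_assoc, ← Real.exp_add]
  congr 2
  ring

lemma integrable_exp_std :
    Integrable (fun x => Real.exp (4/9 * x^2)) (gaussianReal 0 1) := by
  rw [gaussianReal_of_var_ne_zero 0 one_ne_zero,
    show gaussianPDF 0 1 = fun x => ((gaussianPDFReal 0 1 x).toNNReal : ℝ≥0∞) from rfl,
    integrable_withDensity_iff_integrable_smul (measurable_gaussianPDFReal 0 1).real_toNNReal,
    pdf_smul_exp]
  exact (integrable_exp_neg_mul_sq (by norm_num : (0:ℝ) < 1/18)).const_mul _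

lemma integral_exp_std :
    ∫ x, Real.exp (4/9 * x^2) ∂(gaussianReal 0 1) = 3 := by
  rw [gaussianReal_of_var_ne_zero 0 one_ne_zero,
    show gaussianPDF 0 1 = fun x => ((gaussianPDFReal 0 1 x).toNNReal : ℝ≥0∞) from rfl,
    integral_withDensity_eq_integral_smul (measurable_gaussianPDFReal 0 1).real_toNNReal,
    show (fun x => (gaussianPDFReal 0 1 x).toNNReal • Real.exp (4/9 * x^2))
      = fun x => (Real.sqrt (2 * π))⁻¹ * Real.exp (-(1/18) * x^2) from pdf_smul_exp,
    integral_const_mul, integral_gaussian,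
    show π / (1/18) = 3^2 * (2 * π) by ring]
  have h : Real.sqrt (3^2 * (2 * π)) = 3 * Real.sqrt (2 * π) := by
    rw [Real.sqrt_mul (by positivity), Real.sqrt_sq (by norm_num : (0:ℝ) ≤ 3)]
  rw [h]
  field_simp

lemma gauss_sigma_map {σ : ℝ} (hσ : 0 < σ) :
    (gaussianReal 0 1).map (σ * ·) = gaussianReal 0 ⟨σ^2, sq_nonneg σ⟩ := by
  rw [gaussianReal_map_const_mul, mul_zero, mul_one]
  rfl

lemma meas_exp_t (t : ℝ) : Measurable (fun z : ℝ => Real.exp (t * z^2)) :=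
  ((measurable_id.pow_const 2).const_mul t).exp

lemma exp_sq_comp {σ : ℝ} (hσ : 0 < σ) :
    ((fun z => Real.exp (4/(9*σ^2) * z^2)) ∘ (σ * ·)) = fun x => Real.exp (4/9 * x^2) := by
  funext x
  simp only [Function.comp_apply]
  congr 1
  field_simp

lemma integral_exp_sigma {σ : ℝ} (hσ : 0 < σ) :
    ∫ z, Real.exp (4/(9*σ^2) * z^2) ∂(gaussianReal 0 ⟨σ^2, sq_nonneg σ⟩) = 3 := by
  rw [← gauss_sigma_map hσ, integral_map (measurable_const_mul σ).aemeasurable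
    (meas_exp_t _).aestronglyMeasurable]
  calc ∫ x, Real.exp (4/(9*σ^2) * (σ * x)^2) ∂(gaussianReal 0 1)
      = ∫ x, Real.exp (4/9 * x^2) ∂(gaussianReal 0 1) := by
        rw [show (fun x => Real.exp (4/(9*σ^2) * (σ * x)^2))
          = fun x => Real.exp (4/9 * x^2) from exp_sq_comp hσ]
    _ = 3 := integral_exp_std

lemma integrable_exp_sigma {σ : ℝ} (hσ : 0 < σ) :
    Integrable (fun z => Real.exp (4/(9*σ^2) * z^2)) (gaussianReal 0 ⟨σ^2, sq_nonneg σ⟩) := by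
  rw [← gauss_sigma_map hσ,
    integrable_map_measure (meas_exp_t _).aestronglyMeasurable (measurable_const_mul σ).aemeasurable,
    exp_sq_comp hσ]
  exact integrable_exp_std


lemma pi_dirac {ι : Type*} [Fintype ι] {α : ι → Type*} [∀ i, MeasurableSpace (α i)]
    (x : ∀ i, α i) :
    Measure.pi (fun i => Measure.dirac (x i)) = Measure.dirac x := by
  classical
  refine Measure.pi_eq (μ := fun i => Measure.dirac (x i)) fun s hs => ?_
  rw [Measure.dirac_apply' _ (MeasurableSet.univ_pi hs)]
  by_cases h : ∀ i, x i ∈ s i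
  · rw [Set.indicator_of_mem (by simpa using h)]
    rw [Finset.prod_congr rfl (fun i _ => by
      rw [Measure.dirac_apply' _ (hs i), Set.indicator_of_mem (h i)])]
    simp
  · push_neg at h
    obtain ⟨i0, hi0⟩ := h
    rw [Set.indicator_of_notMem (by simpa using ⟨i0, hi0⟩)]
    refine (Finset.prod_eq_zero (Finset.mem_univ i0) ?_).symm
    rw [Measure.dirac_apply' _ (hs i0), Set.indicator_of_notMem hi0]

set_option maxHeartbeats 1000000 in
/-- **Lemma (second moment of the `ℓ_∞`-norm of a shifted Gaussian vector).**
If `‖v‖_∞ ≤ 1`, `δ ≥ 0`, `σ ≥ 0`, and `X ~ N(δ·v, σ²·I_{d×d})` (i.e. the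
coordinates are independent with `X_j ~ N(δ·v_j, σ²)`), then
`E[‖X‖_∞²] ≤ 3σ²·log(3d) + 4δ²`. -/
theorem gaussian_sup_norm_sq_moment
    (d : ℕ) (hd : 1 ≤ d) (v : Fin d → ℝ) (hv : ∀ j, |v j| ≤ 1)
    (δ σ : ℝ) (hδ : 0 ≤ δ) (hσ : 0 ≤ σ) :
    (∫ x : Fin d → ℝ, (⨆ j, |x j|) ^ 2
        ∂(Measure.pi fun j => gaussianReal (δ * v j) ⟨σ ^ 2, sq_nonneg σ⟩)) ≤
      3 * σ ^ 2 * Real.log (3 * d) + 4 * δ ^ 2 := by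
  have hne : Nonempty (Fin d) := ⟨⟨0, hd⟩⟩
  have hbdd : ∀ y : Fin d → ℝ, BddAbove (Set.range fun j => |y j|) :=
    fun y => (Set.finite_range _).bddAbove
  have hd1 : (1:ℝ) ≤ (d:ℝ) := by exact_mod_cast hd
  have hlog : 0 ≤ Real.log (3 * d) := by
    apply Real.log_nonneg; nlinarith
  have hF : Measurable (fun x : Fin d → ℝ => (⨆ j, |x j|) ^ 2) :=
    (measurable_supabs d hd).pow_const 2
  -- bound on |δ * v j|
  have hδv : ∀ j, |δ * v j| ≤ δ := fun j => by
    rw [abs_mul, abs_of_nonneg hδ]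
    calc δ * |v j| ≤ δ * 1 := by nlinarith [abs_nonneg (v j), hv j]
      _ = δ := mul_one δ
  rcases eq_or_lt_of_le hσ with h0 | h0
  · -- σ = 0 case
    have hσ0 : @Eq ℝ≥0 ⟨σ ^ 2, sq_nonneg σ⟩ 0 := by
      ext; simp [← h0]; rfl
    simp_rw [hσ0, gaussianReal_zero_var]
    rw [pi_dirac (fun j => δ * v j), integral_dirac' _ _ hF.stronglyMeasurable]
    have hsup_le : (⨆ j, |δ * v j|) ≤ δ := ciSup_le hδv
    have hsup_nonneg : 0 ≤ ⨆ j, |δ * v j| :=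
      le_trans (abs_nonneg _) (le_ciSup (hbdd _) (Classical.arbitrary _))
    have : (⨆ j, |δ * v j|) ^ 2 ≤ δ ^ 2 := by nlinarith
    nlinarith [mul_nonneg (mul_nonneg (by norm_num : (0:ℝ) ≤ 3) (sq_nonneg σ)) hlog]
  · -- σ > 0 case
    set vσ : ℝ≥0 := ⟨σ ^ 2, sq_nonneg σ⟩ with hvσ
    set ν : Measure ℝ := gaussianReal 0 vσ with hν
    set μ0 : Measure (Fin d → ℝ) := Measure.pi (fun _ : Fin d => ν) with hμ0
    set t : ℝ := 4 / (9 * σ ^ 2) with htdef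
    have ht : 0 < t := by positivity
    set M : (Fin d → ℝ) → ℝ := fun y => ⨆ j, |y j| with hMdef
    have hM : Measurable M := measurable_supabs d hd
    -- measure-preserving shift
    have hmp : MeasurePreserving (fun (y : Fin d → ℝ) i => y i + δ * v i) μ0
        (Measure.pi fun j => gaussianReal (δ * v j) vσ) := by
      refine measurePreserving_pi _ _ (fun i => ⟨measurable_add_const _, ?_⟩)
      rw [hν, gaussianReal_map_add_const, zero_add]
    have hstep1 : (∫ x : Fin d → ℝ, (⨆ j, |x j|) ^ 2
          ∂(Measure.pi fun j => gaussianReal (δ * v j) vσ))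
        = ∫ y, (⨆ j, |y j + δ * v j|) ^ 2 ∂μ0 := by
      rw [← hmp.map_eq, integral_map hmp.measurable.aemeasurable hF.aestronglyMeasurable]
    -- pointwise bound
    have h_pt : ∀ y, (⨆ j, |y j + δ * v j|) ^ 2 ≤ (4/3) * M y ^ 2 + 4 * δ ^ 2 := by
      intro y
      have hMy : 0 ≤ M y :=
        le_trans (abs_nonneg _) (le_ciSup (hbdd y) (Classical.arbitrary _))
      have h1 : (⨆ j, |y j + δ * v j|) ≤ M y + δ := by
        refine ciSup_le fun j => (abs_add_le _ _).trans (add_le_add ?_ (hδv j))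
        exact le_ciSup (hbdd y) j
      have h2 : 0 ≤ ⨆ j, |y j + δ * v j| :=
        le_trans (abs_nonneg _) (le_ciSup (hbdd _) (Classical.arbitrary _))
      nlinarith [sq_nonneg (M y - 3 * δ)]
    -- integrability of exp(t * (y j)^2)
    have hνint : Integrable (fun z => Real.exp (t * z ^ 2)) ν := integrable_exp_sigma h0
    have hνval : ∫ z, Real.exp (t * z ^ 2) ∂ν = 3 := integral_exp_sigma h0
    have hjint : ∀ j : Fin d, Integrable (fun y : Fin d → ℝ => Real.exp (t * (y j) ^ 2)) μ0 := by
      intro j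
      have h2 : Integrable (fun z => Real.exp (t * z ^ 2)) (μ0.map (Function.eval j)) := by
        rw [map_eval_pi _ j]; exact hνint
      have h3 := (integrable_map_measure (g := fun z => Real.exp (t * z ^ 2))
        (meas_exp_t t).aestronglyMeasurable
        (measurable_pi_apply j).aemeasurable).1 h2
      simpa [Function.comp_def] using h3
    have hsum : Integrable (fun y : Fin d → ℝ => ∑ j, Real.exp (t * (y j) ^ 2)) μ0 :=
      integrable_finset_sum _ fun j _ => hjint j
    -- pointwise: exp(t M^2) ≤ sum
    have hexp_le : ∀ y : Fin d → ℝ,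
        Real.exp (t * M y ^ 2) ≤ ∑ j, Real.exp (t * (y j) ^ 2) := by
      intro y
      obtain ⟨j0, -, hj0⟩ := Finset.exists_mem_eq_sup' (Finset.univ_nonempty (α := Fin d))
        (fun j => |y j|)
      have hMy : M y = |y j0| := by
        rw [hMdef]; simp only
        rw [← Finset.sup'_univ_eq_ciSup, hj0]
      have : Real.exp (t * M y ^ 2) = Real.exp (t * (y j0) ^ 2) := by
        rw [hMy, sq_abs]
      rw [this]
      exact Finset.single_le_sum (f := fun j => Real.exp (t * (y j) ^ 2))
        (fun j _ => (Real.exp_pos _).le) (Finset.mem_univ j0)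
    have hexpM : Integrable (fun y => Real.exp (t * M y ^ 2)) μ0 := by
      refine hsum.mono' ((hM.pow_const 2).const_mul t).exp.aestronglyMeasurable
        (ae_of_all _ fun y => ?_)
      rw [Real.norm_eq_abs, abs_of_pos (Real.exp_pos _)]
      exact hexp_le y
    have hM2 : Integrable (fun y => M y ^ 2) μ0 := by
      refine (hexpM.const_mul t⁻¹).mono' ((hM.pow_const 2)).aestronglyMeasurable
        (ae_of_all _ fun y => ?_)
      rw [Real.norm_eq_abs, abs_of_nonneg (sq_nonneg _)]
      have h1 : t * M y ^ 2 ≤ Real.exp (t * M y ^ 2) :=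
        le_trans (by linarith [Real.add_one_le_exp (t * M y ^ 2)]) le_rfl
      calc M y ^ 2 = t⁻¹ * (t * M y ^ 2) := by field_simp
        _ ≤ t⁻¹ * Real.exp (t * M y ^ 2) := by
            exact mul_le_mul_of_nonneg_left h1 (by positivity)
    -- Jensen
    have hjen : Real.exp (∫ y, t * M y ^ 2 ∂μ0) ≤ ∫ y, Real.exp (t * M y ^ 2) ∂μ0 := by
      have := convexOn_exp.map_integral_le (μ := μ0) continuous_exp.continuousOn
        isClosed_univ (ae_of_all _ fun y => Set.mem_univ _) (hM2.const_mul t)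
        (by simpa [Function.comp_def] using hexpM)
      simpa [Function.comp] using this
    -- sum bound
    have hsumval : ∫ y, Real.exp (t * M y ^ 2) ∂μ0 ≤ 3 * d := by
      have hle := integral_mono hexpM hsum (fun y => hexp_le y)
      rw [integral_finset_sum _ (fun j _ => hjint j)] at hle
      have hmarg : ∀ j : Fin d, ∫ y, Real.exp (t * (y j) ^ 2) ∂μ0 = 3 := by
        intro j
        have h2 := integral_map (μ := μ0) (φ := Function.eval j)
          (f := fun z => Real.exp (t * z ^ 2))
          (measurable_pi_apply j).aemeasurable (meas_exp_t t).aestronglyMeasurable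
        rw [map_eval_pi _ j] at h2
        rw [← h2, hνval]
      rw [Finset.sum_congr rfl (fun j _ => hmarg j), Finset.sum_const, Finset.card_univ,
        Fintype.card_fin, nsmul_eq_mul] at hle
      linarith
    -- conclude the moment bound
    have hIM : ∫ y, M y ^ 2 ∂μ0 ≤ (9 * σ ^ 2 / 4) * Real.log (3 * d) := by
      have h3d : (0:ℝ) < 3 * d := by nlinarith
      have hexpb : Real.exp (t * ∫ y, M y ^ 2 ∂μ0) ≤ 3 * d := by
        rw [← integral_const_mul]
        exact hjen.trans hsumval
      have := (Real.le_log_iff_exp_le h3d).2 hexpb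
      rw [htdef] at this
      rw [show (9 * σ ^ 2 / 4) * Real.log (3 * d)
          = (9 * σ ^ 2 / 4) * (4 / (9 * σ ^ 2) * ∫ y, M y ^ 2 ∂μ0)
            + (9 * σ ^ 2 / 4) * (Real.log (3 * d) - 4 / (9 * σ ^ 2) * ∫ y, M y ^ 2 ∂μ0)
          by ring]
      have hcancel : (9 * σ ^ 2 / 4) * (4 / (9 * σ ^ 2) * ∫ y, M y ^ 2 ∂μ0)
          = ∫ y, M y ^ 2 ∂μ0 := by
        field_simp
      rw [hcancel]
      nlinarith [mul_nonneg (by positivity : (0:ℝ) ≤ 9 * σ ^ 2 / 4) (sub_nonneg.2 this)]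
    have hInt : Integrable (fun y => (4/3) * M y ^ 2 + 4 * δ ^ 2) μ0 :=
      (hM2.const_mul _).add (integrable_const _)
    calc (∫ x : Fin d → ℝ, (⨆ j, |x j|) ^ 2
          ∂(Measure.pi fun j => gaussianReal (δ * v j) vσ))
        = ∫ y, (⨆ j, |y j + δ * v j|) ^ 2 ∂μ0 := hstep1
      _ ≤ ∫ y, ((4/3) * M y ^ 2 + 4 * δ ^ 2) ∂μ0 := by
          refine integral_mono_of_nonneg (ae_of_all _ fun y => sq_nonneg _) hInt
            (ae_of_all _ fun y => h_pt y)
      _ = (4/3) * (∫ y, M y ^ 2 ∂μ0) + 4 * δ ^ 2 := by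
          rw [integral_add (hM2.const_mul _) (integrable_const _), integral_const_mul,
            integral_const, probReal_univ, one_smul]
      _ ≤ (4/3) * ((9 * σ ^ 2 / 4) * Real.log (3 * d)) + 4 * δ ^ 2 := by
          have := hIM
          nlinarith
      _ = 3 * σ ^ 2 * Real.log (3 * d) + 4 * δ ^ 2 := by ring
end
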